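/- The operator A maps V into V; that is, if u ∈ V then Au ∈ V, i.e. Au is continuous on [ε,Λ] and w(x) ≤ Au(x) ≤ (λ/4)·√Λ for all x ∈ [ε,Λ]. -/

import Mathlib

open Real Set MeasureTheory intervalIntegral

/-- The function `w(x) = (4ε/λ)·√(ε/(Λx))`. -/
noncomputable def wfun (lam ε Λ : ℝ) (x : ℝ) : ℝ :=
  (4 * ε / lam) * Real.sqrt (ε / (Λ * x))

/-- The nonlinear integral operator `A`. -/
noncomputable def opA (lam ε Λ : ℝ) (u : ℝ → ℝ) (x : ℝ) : ℝ :=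
  (lam / 2) * ∫ y in ε..Λ, (1 / (y + x + |y - x|)) * (y * u y / (y + (u y) ^ 2))

/-- Membership in the set `V`: continuous on `[ε,Λ]` and `w(x) ≤ u(x) ≤ (λ/4)√Λ` there. -/
def memV (lam ε Λ : ℝ) (u : ℝ → ℝ) : Prop :=
  ContinuousOn u (Set.Icc ε Λ) ∧
    ∀ x ∈ Set.Icc ε Λ, wfun lam ε Λ x ≤ u x ∧ u x ≤ (lam / 4) * Real.sqrt Λ

private lemma hfrac_le {t v : ℝ} (ht : 0 < t) : t ^ 2 * v / (t ^ 2 + v ^ 2) ≤ t / 2 := by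
  have hden : 0 < t ^ 2 + v ^ 2 := by positivity
  rw [div_le_div_iff₀ hden two_pos]
  nlinarith [mul_nonneg ht.le (sq_nonneg (t - v))]

private lemma hfrac_ge {y w v : ℝ} (hy : 0 < y) (hw : 0 < w) (hwv : w ≤ v) (hvw : v * w ≤ y) :
    y * w / (y + w ^ 2) ≤ y * v / (y + v ^ 2) := by
  have h1 : 0 < y + w ^ 2 := by positivity
  have h2 : 0 < y + v ^ 2 := by positivity
  rw [div_le_div_iff₀ h1 h2]
  nlinarith [mul_nonneg (mul_nonneg hy.le (sub_nonneg.2 hwv)) (sub_nonneg.2 hvw)]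

private lemma hfrac_ge2 {y w c : ℝ} (hy : 0 < y) (hw : 0 ≤ w) (hc0 : 0 ≤ c)
    (hc : w ^ 2 ≤ c * y) : (1 - c) * w ≤ y * w / (y + w ^ 2) := by
  have h1 : 0 < y + w ^ 2 := by positivity
  rw [le_div_iff₀ h1]
  nlinarith [mul_le_mul_of_nonneg_left hc hw, mul_nonneg hc0 (mul_nonneg hw (sq_nonneg w))]

private lemma sq_le_sixteenth {d : ℝ} (hd0 : 0 ≤ d) (hd14 : d ≤ 1/4) : d^2 ≤ 1/16 := by
  nlinarith

private lemma one_sub_sq_nonneg {d : ℝ} (hd0 : 0 ≤ d) (hd14 : d ≤ 1/4) : 0 ≤ 1 - 4*d^2 := by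
  nlinarith [sq_le_sixteenth hd0 hd14]

private lemma key_ineq {lam d : ℝ} (hlam : 2 < lam) (hd0 : 0 ≤ d) (hd14 : d ≤ 1/4)
    (hkey : 2 + 32*d^2 ≤ lam*(1-d)) : 2 ≤ lam * (1 - 4*d^2) * (1 - d) := by
  have h4 : (0:ℝ) ≤ 1 - 4*d^2 := one_sub_sq_nonneg hd0 hd14
  have h16 : d^2 ≤ 1/16 := sq_le_sixteenth hd0 hd14
  nlinarith [mul_le_mul_of_nonneg_right hkey h4, sq_nonneg d,
    mul_nonneg (sq_nonneg d) (by linarith : (0:ℝ) ≤ 1/16 - d^2)]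

private lemma sqrt_inv_eq_rpow {y : ℝ} (hy : 0 < y) : (Real.sqrt y)⁻¹ = y ^ (-(1/2) : ℝ) := by
  rw [Real.rpow_neg hy.le, ← Real.sqrt_eq_rpow]

private lemma sqrt_inv_mul_inv {y : ℝ} (hy : 0 < y) :
    (Real.sqrt y)⁻¹ * y⁻¹ = y ^ (-(3/2) : ℝ) := by
  rw [sqrt_inv_eq_rpow hy, show y⁻¹ = y ^ (-1 : ℝ) by rw [Real.rpow_neg_one],
    ← Real.rpow_add hy]
  norm_num

private lemma wsq_le {ε Λ lam y : ℝ} (hε : 0 < ε) (hΛ : 0 < Λ) (hlam : 2 < lam)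
    (hyε : ε ≤ y) :
    ((4 * ε / lam) * (Real.sqrt ε / Real.sqrt Λ) * (Real.sqrt y)⁻¹) ^ 2 ≤ 4 * (ε/Λ) * y := by
  have hy0 : 0 < y := hε.trans_le hyε
  have hl : 0 < lam := by linarith
  have e1 : Real.sqrt ε ^ 2 = ε := Real.sq_sqrt hε.le
  have e2 : Real.sqrt Λ ^ 2 = Λ := Real.sq_sqrt hΛ.le
  have e3 : Real.sqrt y ^ 2 = y := Real.sq_sqrt hy0.le
  have hsy : 0 < Real.sqrt y := Real.sqrt_pos.2 hy0
  have hsΛ : 0 < Real.sqrt Λ := Real.sqrt_pos.2 hΛ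
  have h1 : ε * ε ≤ y * y := mul_le_mul hyε hyε hε.le hy0.le
  have h2 : (4:ℝ) ≤ lam^2 := by nlinarith
  have h3 : 4 * ε^2 ≤ lam^2 * y^2 := by nlinarith [sq_nonneg y]
  have h4 : 4 * ε * (4 * ε^2) ≤ 4 * ε * (lam^2 * y^2) :=
    mul_le_mul_of_nonneg_left h3 (by positivity)
  calc ((4 * ε / lam) * (Real.sqrt ε / Real.sqrt Λ) * (Real.sqrt y)⁻¹) ^ 2
      = 16 * ε^3 / (lam^2 * Λ * y) := by
        rw [mul_pow, mul_pow, div_pow, div_pow, inv_pow, e1, e2, e3]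
        field_simp
        ring
    _ ≤ 4 * (ε/Λ) * y := by
        rw [div_le_iff₀ (by positivity : (0:ℝ) < lam^2 * Λ * y),
          show 4 * (ε/Λ) * y * (lam^2 * Λ * y) = (4 * ε * (lam^2 * y^2)) * (Λ / Λ) by ring,
          div_self hΛ.ne', mul_one]
        nlinarith [h4]

private lemma final_ineq {lam a b C E X : ℝ} (ha : 0 < a) (hab : a ≤ b) (hbC : b ≤ C)
    (hlam : 0 < lam) (hE : a ^ 2 = E) (hX : b ^ 2 = X) (hd14 : a/C ≤ 1/4)
    (hkey2 : 2 ≤ lam * (1 - 4*(a/C)^2) * (1 - a/C)) :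
    (4 * E / lam) * (a / (C * b)) ≤
      lam / 2 * ((1 - 4*(a/C)^2) * ((4 * E / lam) * (a / C)) *
        ((b - a) / X + ((b)⁻¹ - (C)⁻¹))) := by
  subst hE hX
  have hb : 0 < b := ha.trans_le hab
  have hC : 0 < C := hb.trans_le hbC
  have hs1 : a/b ≤ 1 := div_le_one_of_le₀ hab hb.le
  have hr1 : b/C ≤ 1 := div_le_one_of_le₀ hbC hC.le
  have hprod : (a/b)*(b/C) = a/C := by field_simp
  have hmn : 0 ≤ (1 - a/b)*(1 - b/C) := mul_nonneg (by linarith) (by linarith)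
  have hsum : a/b + b/C ≤ 1 + a/C := by nlinarith [hmn, hprod]
  have hd0 : 0 ≤ a/C := div_nonneg ha.le hC.le
  have h1d : 0 ≤ 1 - 4*(a/C)^2 := one_sub_sq_nonneg hd0 hd14
  have h4 : 2 ≤ lam * (1 - 4*(a/C)^2) * (2 - a/b - b/C) := by
    nlinarith [hkey2, mul_nonneg (mul_nonneg hlam.le h1d)
      (by linarith : (0:ℝ) ≤ 1 + a/C - (a/b + b/C))]
  have e : (b - a) / b^2 + ((b)⁻¹ - (C)⁻¹) = (2 - a/b - b/C)/b := by
    field_simp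
    ring
  rw [e]
  have hL : (4 * a^2 / lam) * (a / (C * b)) = (2*a^3/(lam*C*b)) * 2 := by
    field_simp
    ring
  have hR : lam / 2 * ((1 - 4*(a/C)^2) * ((4 * a^2 / lam) * (a / C)) * ((2 - a/b - b/C)/b))
      = (2*a^3/(lam*C*b)) * (lam * (1 - 4*(a/C)^2) * (2 - a/b - b/C)) := by
    field_simp
    ring
  rw [hL, hR]
  exact mul_le_mul_of_nonneg_left h4 (by positivity)

theorem stmt_5 (ε Λ lam : ℝ) (hε : 0 < ε) (hεΛ : ε < Λ) (hlam : 2 < lam)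
    (hratio : ε / Λ ≤ min (1 / 16)
      (((Real.sqrt (lam ^ 2 + 128 * (lam - 2)) - lam) / 64) ^ 2))
    (u : ℝ → ℝ) (hu : memV lam ε Λ u) :
    memV lam ε Λ (opA lam ε Λ u) := by
  obtain ⟨hucont, hubnd⟩ := hu
  have hΛ : 0 < Λ := hε.trans hεΛ
  have hl : 0 < lam := by linarith
  have hsΛ : 0 < Real.sqrt Λ := Real.sqrt_pos.2 hΛ
  have hsε : 0 < Real.sqrt ε := Real.sqrt_pos.2 hε
  set d : ℝ := Real.sqrt (ε/Λ) with hd_def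
  have hd0 : 0 ≤ d := Real.sqrt_nonneg _
  have hd2 : d ^ 2 = ε/Λ := Real.sq_sqrt (by positivity)
  have hd14 : d ≤ 1/4 := by
    have h1 : ε/Λ ≤ 1/16 := hratio.trans (min_le_left _ _)
    calc d ≤ Real.sqrt (1/16) := Real.sqrt_le_sqrt h1
      _ = 1/4 := by
          rw [show (1/16 : ℝ) = (1/4)^2 by norm_num, Real.sqrt_sq (by norm_num : (0:ℝ) ≤ 1/4)]
  have hkey : 2 + 32*d^2 ≤ lam*(1-d) := by
    have h2 : ε/Λ ≤ ((Real.sqrt (lam ^ 2 + 128 * (lam - 2)) - lam)/64)^2 :=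
      hratio.trans (min_le_right _ _)
    set R := Real.sqrt (lam ^ 2 + 128 * (lam - 2)) with hR_def
    have hRsq : R ^ 2 = lam ^ 2 + 128 * (lam - 2) := Real.sq_sqrt (by nlinarith)
    have hRlam : lam ≤ R := by
      rw [hR_def, Real.le_sqrt' hl]
      nlinarith
    have hdle : d ≤ (R - lam)/64 := by
      calc d ≤ Real.sqrt (((R - lam)/64)^2) := Real.sqrt_le_sqrt h2
        _ = (R - lam)/64 := Real.sqrt_sq (by linarith)
    have h3 : (lam + 64*d)^2 ≤ R^2 := by nlinarith [hdle, hRlam, hd0, hl]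
    nlinarith [h3, hRsq, hd0]
  have hdAC : d = Real.sqrt ε / Real.sqrt Λ := by
    rw [hd_def, Real.sqrt_div hε.le]
  -- basic facts about u
  have hw_eq : ∀ y : ℝ, 0 < y → wfun lam ε Λ y
      = ((4 * ε / lam) * (Real.sqrt ε / Real.sqrt Λ)) * (Real.sqrt y)⁻¹ := by
    intro y hy
    rw [wfun, Real.sqrt_div hε.le, Real.sqrt_mul hΛ.le]
    ring
  have hw_pos : ∀ y ∈ Icc ε Λ, 0 < wfun lam ε Λ y := by
    intro y hy
    have hy0 : 0 < y := hε.trans_le hy.1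
    rw [hw_eq y hy0]
    positivity
  have hu_pos : ∀ y ∈ Icc ε Λ, 0 < u y := fun y hy =>
    (hw_pos y hy).trans_le (hubnd y hy).1
  have hden_pos : ∀ y ∈ Icc ε Λ, 0 < y + u y ^ 2 := by
    intro y hy
    have := hy.1
    have := sq_nonneg (u y)
    linarith
  have hh_nonneg : ∀ y ∈ Icc ε Λ, 0 ≤ y * u y / (y + u y ^ 2) := fun y hy =>
    div_nonneg (mul_nonneg (hε.le.trans hy.1) (hu_pos y hy).le) (hden_pos y hy).le
  have hcont_h : ContinuousOn (fun y => y * u y / (y + u y ^ 2)) (Icc ε Λ) :=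
    (continuous_id.continuousOn.mul hucont).div
      (continuous_id.continuousOn.add (hucont.pow 2)) (fun y hy => (hden_pos y hy).ne')
  -- the kernel
  have hker : ∀ x y : ℝ, y + x + |y - x| = 2 * max x y := by
    intro x y
    rcases le_total y x with hc | hc
    · rw [abs_of_nonpos (by linarith), max_eq_left hc]; ring
    · rw [abs_of_nonneg (by linarith), max_eq_right hc]; ring
  have hker_pos : ∀ x : ℝ, ∀ y ∈ Icc ε Λ, 0 < y + x + |y - x| := by
    intro x y hy
    rw [hker]
    have : 0 < max x y := lt_max_of_lt_right (hε.trans_le hy.1)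
    linarith
  have hFcont : ∀ x : ℝ, ContinuousOn
      (fun y => (1 / (y + x + |y - x|)) * (y * u y / (y + u y ^ 2))) (Icc ε Λ) := by
    intro x
    apply ContinuousOn.mul _ hcont_h
    apply ContinuousOn.div continuousOn_const
    · exact ((continuous_id.add continuous_const).add
        ((continuous_id.sub continuous_const).abs)).continuousOn
    · exact fun y hy => (hker_pos x y hy).ne'
  have hIcc : uIcc ε Λ = Icc ε Λ := uIcc_of_le hεΛ.le
  -- representation of opA for continuity
  have hrepr : ∀ x ∈ Icc ε Λ, opA lam ε Λ u x
      = lam / 2 * ((∫ y in ε..x, y * u y / (y + u y ^ 2)) / (2*x)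
          + ∫ y in x..Λ, (y * u y / (y + u y ^ 2)) / (2*y)) := by
    intro x hx
    have hx0 : 0 < x := hε.trans_le hx.1
    have hI1 : IntervalIntegrable
        (fun y => (1 / (y + x + |y - x|)) * (y * u y / (y + u y ^ 2))) volume ε x := by
      apply ContinuousOn.intervalIntegrable
      rw [uIcc_of_le hx.1]
      exact (hFcont x).mono (Icc_subset_Icc le_rfl hx.2)
    have hI2 : IntervalIntegrable
        (fun y => (1 / (y + x + |y - x|)) * (y * u y / (y + u y ^ 2))) volume x Λ := by
      apply ContinuousOn.intervalIntegrable
      rw [uIcc_of_le hx.2]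
      exact (hFcont x).mono (Icc_subset_Icc hx.1 le_rfl)
    have e1 : (∫ y in ε..x, (1 / (y + x + |y - x|)) * (y * u y / (y + u y ^ 2)))
        = (∫ y in ε..x, y * u y / (y + u y ^ 2)) / (2*x) := by
      rw [show (∫ y in ε..x, (1 / (y + x + |y - x|)) * (y * u y / (y + u y ^ 2)))
          = ∫ y in ε..x, (2*x)⁻¹ * (y * u y / (y + u y ^ 2)) from
        integral_congr (fun y hy => by
          rw [uIcc_of_le hx.1] at hy
          show (1 / (y + x + |y - x|)) * (y * u y / (y + u y ^ 2))
            = (2*x)⁻¹ * (y * u y / (y + u y ^ 2))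
          rw [abs_of_nonpos (by linarith [hy.2] : y - x ≤ 0),
            show y + x + -(y - x) = 2*x by ring, one_div]),
        intervalIntegral.integral_const_mul, inv_mul_eq_div]
    have e2 : (∫ y in x..Λ, (1 / (y + x + |y - x|)) * (y * u y / (y + u y ^ 2)))
        = ∫ y in x..Λ, (y * u y / (y + u y ^ 2)) / (2*y) := by
      apply integral_congr
      intro y hy
      rw [uIcc_of_le hx.2] at hy
      show (1 / (y + x + |y - x|)) * (y * u y / (y + u y ^ 2))
        = (y * u y / (y + u y ^ 2)) / (2*y)
      rw [abs_of_nonneg (by linarith [hy.1] : 0 ≤ y - x),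
        show y + x + (y - x) = 2*y by ring, one_div, inv_mul_eq_div]
    rw [opA, ← integral_add_adjacent_intervals hI1 hI2, e1, e2]
  -- continuity
  have hcontA : ContinuousOn (opA lam ε Λ u) (Icc ε Λ) := by
    have hP : ContinuousOn (fun x => ∫ y in ε..x, y * u y / (y + u y ^ 2)) (Icc ε Λ) := by
      have := intervalIntegral.continuousOn_primitive_interval
        (a := ε) (b := Λ) (μ := volume) (f := fun y => y * u y / (y + u y ^ 2)) ?_
      · rwa [hIcc] at this
      · rw [hIcc]
        exact hcont_h.integrableOn_compact isCompact_Icc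
    have hQ : ContinuousOn (fun x => ∫ y in x..Λ, (y * u y / (y + u y ^ 2)) / (2*y))
        (Icc ε Λ) := by
      have := intervalIntegral.continuousOn_primitive_interval_left
        (a := ε) (b := Λ) (μ := volume) (f := fun y => (y * u y / (y + u y ^ 2)) / (2*y)) ?_
      · rwa [hIcc] at this
      · rw [hIcc]
        apply ContinuousOn.integrableOn_compact isCompact_Icc
        exact hcont_h.div (continuous_const.mul continuous_id).continuousOn
          (fun y hy => by have := hε.trans_le hy.1; positivity)
    have hG : ContinuousOn (fun x => lam / 2 *
        ((∫ y in ε..x, y * u y / (y + u y ^ 2)) / (2*x)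
          + ∫ y in x..Λ, (y * u y / (y + u y ^ 2)) / (2*y))) (Icc ε Λ) := by
      apply continuousOn_const.mul
      apply ContinuousOn.add _ hQ
      exact hP.div (continuous_const.mul continuous_id).continuousOn
        (fun x hx => by have := hε.trans_le hx.1; positivity)
    exact hG.congr hrepr
  -- upper bound
  have hupper : ∀ x ∈ Icc ε Λ, opA lam ε Λ u x ≤ lam / 4 * Real.sqrt Λ := by
    intro x hx
    have hFint : IntervalIntegrable
        (fun y => (1 / (y + x + |y - x|)) * (y * u y / (y + u y ^ 2))) volume ε Λ := by
      apply ContinuousOn.intervalIntegrable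
      rw [hIcc]
      exact hFcont x
    have hφcont : ContinuousOn (fun y : ℝ => (1/4) * y ^ (-(1/2) : ℝ)) (Icc ε Λ) :=
      continuousOn_const.mul (continuousOn_id.rpow_const
        (fun y hy => Or.inl (hε.trans_le hy.1).ne'))
    have hφint : IntervalIntegrable (fun y : ℝ => (1/4) * y ^ (-(1/2) : ℝ)) volume ε Λ := by
      apply ContinuousOn.intervalIntegrable
      rw [hIcc]; exact hφcont
    have hmono : ∀ y ∈ Icc ε Λ, (1 / (y + x + |y - x|)) * (y * u y / (y + u y ^ 2))
        ≤ (1/4) * y ^ (-(1/2) : ℝ) := by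
      intro y hy
      have hy0 : 0 < y := hε.trans_le hy.1
      have hs : 0 < Real.sqrt y := Real.sqrt_pos.2 hy0
      have hyy : Real.sqrt y * Real.sqrt y = y := Real.mul_self_sqrt hy0.le
      have hK : 1 / (y + x + |y - x|) ≤ 1 / (2*y) := by
        apply one_div_le_one_div_of_le (by linarith)
        have := le_abs_self (y - x)
        linarith
      have hK0 : 0 ≤ 1 / (y + x + |y - x|) := by
        have := hker_pos x y hy
        positivity
      have hh2 : y * u y / (y + u y ^ 2) ≤ Real.sqrt y / 2 := by
        have := hfrac_le (t := Real.sqrt y) (v := u y) hs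
        rwa [Real.sq_sqrt hy0.le] at this
      refine (mul_le_mul hK hh2 (hh_nonneg y hy) (by positivity)).trans (le_of_eq ?_)
      rw [Real.rpow_neg hy0.le, ← Real.sqrt_eq_rpow]
      apply mul_right_cancel₀ hs.ne'
      field_simp
      linarith [hyy]
    have h1 := integral_mono_on hεΛ.le hFint hφint hmono
    have h2 : (∫ y in ε..Λ, (1/4) * y ^ (-(1/2) : ℝ))
        = (Real.sqrt Λ - Real.sqrt ε) / 2 := by
      rw [intervalIntegral.integral_const_mul, integral_rpow (Or.inl (by norm_num)),
        show (-(1/2) : ℝ) + 1 = 1/2 by norm_num, ← Real.sqrt_eq_rpow, ← Real.sqrt_eq_rpow]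
      ring
    rw [h2] at h1
    have h3 : opA lam ε Λ u x ≤ lam / 2 * ((Real.sqrt Λ - Real.sqrt ε) / 2) := by
      rw [opA]
      exact mul_le_mul_of_nonneg_left h1 (by positivity)
    have h5 : 0 ≤ lam * Real.sqrt ε := mul_nonneg hl.le (Real.sqrt_nonneg ε)
    nlinarith [h3, h5]
  -- lower bound
  have hlower : ∀ x ∈ Icc ε Λ, wfun lam ε Λ x ≤ opA lam ε Λ u x := by
    intro x hx
    have hx0 : 0 < x := hε.trans_le hx.1
    have hsx : 0 < Real.sqrt x := Real.sqrt_pos.2 hx0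
    set c : ℝ := (1 - 4*d^2) * ((4 * ε / lam) * (Real.sqrt ε / Real.sqrt Λ)) with hc_def
    have h4d : 0 ≤ 1 - 4*d^2 := one_sub_sq_nonneg hd0 hd14
    have hc0 : 0 ≤ c := mul_nonneg h4d (by positivity)
    -- pointwise bound
    have hpt : ∀ y ∈ Icc ε Λ, c * ((Real.sqrt y)⁻¹ * (2 * max x y)⁻¹)
        ≤ (1 / (y + x + |y - x|)) * (y * u y / (y + u y ^ 2)) := by
      intro y hy
      have hy0 : 0 < y := hε.trans_le hy.1
      have hsy : 0 < Real.sqrt y := Real.sqrt_pos.2 hy0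
      have hmax : 0 < max x y := lt_max_of_lt_right hy0
      have hbound : c * (Real.sqrt y)⁻¹ ≤ y * u y / (y + u y ^ 2) := by
        have h_w_le : wfun lam ε Λ y ≤ u y := (hubnd y hy).1
        have hw_pos' : 0 < wfun lam ε Λ y := hw_pos y hy
        have huw : u y * wfun lam ε Λ y ≤ y := by
          have h1 : u y ≤ lam / 4 * Real.sqrt Λ := (hubnd y hy).2
          have hsey : Real.sqrt ε * (Real.sqrt y)⁻¹ ≤ 1 := by
            rw [← div_eq_mul_inv]
            exact div_le_one_of_le₀ (Real.sqrt_le_sqrt hy.1) hsy.le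
          calc u y * wfun lam ε Λ y
              ≤ (lam / 4 * Real.sqrt Λ) *
                (((4 * ε / lam) * (Real.sqrt ε / Real.sqrt Λ)) * (Real.sqrt y)⁻¹) := by
                apply mul_le_mul h1 (le_of_eq (hw_eq y hy0)) hw_pos'.le (by positivity)
            _ = ε * (Real.sqrt ε * (Real.sqrt y)⁻¹) := by field_simp
            _ ≤ ε * 1 := mul_le_mul_of_nonneg_left hsey hε.le
            _ ≤ y := by rw [mul_one]; exact hy.1
        have hwsq : wfun lam ε Λ y ^ 2 ≤ (4*d^2) * y := by
          rw [hw_eq y hy0, hd2]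
          exact wsq_le hε hΛ hlam hy.1
        have step2 : (1 - 4*d^2) * wfun lam ε Λ y
            ≤ y * wfun lam ε Λ y / (y + wfun lam ε Λ y ^ 2) :=
          hfrac_ge2 hy0 hw_pos'.le (by positivity) hwsq
        have step1 : y * wfun lam ε Λ y / (y + wfun lam ε Λ y ^ 2)
            ≤ y * u y / (y + u y ^ 2) := hfrac_ge hy0 hw_pos' h_w_le huw
        calc c * (Real.sqrt y)⁻¹ = (1 - 4*d^2) * wfun lam ε Λ y := by
              rw [hw_eq y hy0, hc_def]; ring
          _ ≤ _ := step2.trans step1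
      rw [hker x y, show c * ((Real.sqrt y)⁻¹ * (2 * max x y)⁻¹)
          = (2 * max x y)⁻¹ * (c * (Real.sqrt y)⁻¹) by ring, one_div]
      exact mul_le_mul_of_nonneg_left hbound (by positivity)
    -- integrability of the lower comparison function
    have hgcont : ContinuousOn (fun y => c * ((Real.sqrt y)⁻¹ * (2 * max x y)⁻¹))
        (Icc ε Λ) := by
      apply continuousOn_const.mul
      apply ContinuousOn.mul
      · exact Real.continuous_sqrt.continuousOn.inv₀
          (fun y hy => (Real.sqrt_pos.2 (hε.trans_le hy.1)).ne')
      · refine ((continuous_const.mul (continuous_const.max continuous_id)).continuousOn).inv₀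
          (fun y hy => ?_)
        have : 0 < max x y := lt_max_of_lt_right (hε.trans_le hy.1)
        exact (mul_pos two_pos this).ne'
    have hgI : IntervalIntegrable (fun y => c * ((Real.sqrt y)⁻¹ * (2 * max x y)⁻¹))
        volume ε Λ := by
      apply ContinuousOn.intervalIntegrable
      rw [hIcc]; exact hgcont
    have hFI : IntervalIntegrable
        (fun y => (1 / (y + x + |y - x|)) * (y * u y / (y + u y ^ 2))) volume ε Λ := by
      apply ContinuousOn.intervalIntegrable
      rw [hIcc]; exact hFcont x
    have hmono := integral_mono_on hεΛ.le hgI hFI hpt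
    -- computing the integral of the comparison function
    have hg1 : IntervalIntegrable (fun y => c * ((Real.sqrt y)⁻¹ * (2 * max x y)⁻¹))
        volume ε x := by
      apply ContinuousOn.intervalIntegrable
      rw [uIcc_of_le hx.1]
      exact hgcont.mono (Icc_subset_Icc le_rfl hx.2)
    have hg2 : IntervalIntegrable (fun y => c * ((Real.sqrt y)⁻¹ * (2 * max x y)⁻¹))
        volume x Λ := by
      apply ContinuousOn.intervalIntegrable
      rw [uIcc_of_le hx.2]
      exact hgcont.mono (Icc_subset_Icc hx.1 le_rfl)
    have e1 : (∫ y in ε..x, c * ((Real.sqrt y)⁻¹ * (2 * max x y)⁻¹))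
        = (c * (2*x)⁻¹) * ((Real.sqrt x - Real.sqrt ε) / (1/2)) := by
      rw [show (∫ y in ε..x, c * ((Real.sqrt y)⁻¹ * (2 * max x y)⁻¹))
          = ∫ y in ε..x, (c * (2*x)⁻¹) * y ^ (-(1/2) : ℝ) from
        integral_congr (fun y hy => by
          rw [uIcc_of_le hx.1] at hy
          have hy0 : 0 < y := hε.trans_le hy.1
          show c * ((Real.sqrt y)⁻¹ * (2 * max x y)⁻¹) = (c * (2*x)⁻¹) * y ^ (-(1/2) : ℝ)
          rw [max_eq_left hy.2, ← sqrt_inv_eq_rpow hy0]; ring),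
        intervalIntegral.integral_const_mul, integral_rpow (Or.inl (by norm_num)),
        show (-(1/2) : ℝ) + 1 = 1/2 by norm_num, ← Real.sqrt_eq_rpow, ← Real.sqrt_eq_rpow]
    have e2 : (∫ y in x..Λ, c * ((Real.sqrt y)⁻¹ * (2 * max x y)⁻¹))
        = (c * 2⁻¹) * ((Real.sqrt Λ)⁻¹ / (-(1/2)) - (Real.sqrt x)⁻¹ / (-(1/2))) := by
      rw [show (∫ y in x..Λ, c * ((Real.sqrt y)⁻¹ * (2 * max x y)⁻¹))
          = ∫ y in x..Λ, (c * 2⁻¹) * y ^ (-(3/2) : ℝ) from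
        integral_congr (fun y hy => by
          rw [uIcc_of_le hx.2] at hy
          have hy0 : 0 < y := hx0.trans_le hy.1
          show c * ((Real.sqrt y)⁻¹ * (2 * max x y)⁻¹) = (c * 2⁻¹) * y ^ (-(3/2) : ℝ)
          rw [max_eq_right hy.1, show (2*y)⁻¹ = 2⁻¹ * y⁻¹ by rw [mul_inv],
            show c * ((Real.sqrt y)⁻¹ * (2⁻¹ * y⁻¹))
              = (c * 2⁻¹) * ((Real.sqrt y)⁻¹ * y⁻¹) by ring, sqrt_inv_mul_inv hy0]),
        intervalIntegral.integral_const_mul, integral_rpow]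
      · rw [show (-(3/2) : ℝ) + 1 = -(1/2) by norm_num,
          ← sqrt_inv_eq_rpow hΛ, ← sqrt_inv_eq_rpow hx0]
        ring
      · refine Or.inr ⟨by norm_num, ?_⟩
        rw [uIcc_of_le hx.2]
        intro hmem
        exact absurd hmem.1 (not_le.2 hx0)
    have hsplit : (∫ y in ε..Λ, c * ((Real.sqrt y)⁻¹ * (2 * max x y)⁻¹))
        = c * ((Real.sqrt x - Real.sqrt ε) / x + ((Real.sqrt x)⁻¹ - (Real.sqrt Λ)⁻¹)) := by
      rw [← integral_add_adjacent_intervals hg1 hg2, e1, e2]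
      ring
    have hint_lb : lam / 2 * (c * ((Real.sqrt x - Real.sqrt ε) / x
        + ((Real.sqrt x)⁻¹ - (Real.sqrt Λ)⁻¹))) ≤ opA lam ε Λ u x := by
      rw [opA, ← hsplit]
      exact mul_le_mul_of_nonneg_left hmono (by positivity)
    have hkey2 : 2 ≤ lam * (1 - 4*(Real.sqrt ε / Real.sqrt Λ)^2) * (1 - Real.sqrt ε / Real.sqrt Λ) := by
      rw [← hdAC]
      exact key_ineq hlam hd0 hd14 hkey
    have hfin := final_ineq (lam := lam) (a := Real.sqrt ε) (b := Real.sqrt x)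
      (C := Real.sqrt Λ) hsε (Real.sqrt_le_sqrt hx.1) (Real.sqrt_le_sqrt hx.2) hl
      (Real.sq_sqrt hε.le) (Real.sq_sqrt hx0.le) (hdAC ▸ hd14) hkey2
    calc wfun lam ε Λ x = (4 * ε / lam) * (Real.sqrt ε / (Real.sqrt Λ * Real.sqrt x)) := by
          rw [wfun, Real.sqrt_div hε.le, Real.sqrt_mul hΛ.le]
      _ ≤ lam / 2 * ((1 - 4*(Real.sqrt ε / Real.sqrt Λ)^2)
            * ((4 * ε / lam) * (Real.sqrt ε / Real.sqrt Λ))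
            * ((Real.sqrt x - Real.sqrt ε) / x + ((Real.sqrt x)⁻¹ - (Real.sqrt Λ)⁻¹))) := hfin
      _ = lam / 2 * (c * ((Real.sqrt x - Real.sqrt ε) / x
            + ((Real.sqrt x)⁻¹ - (Real.sqrt Λ)⁻¹))) := by rw [hc_def, hdAC]
      _ ≤ opA lam ε Λ u x := hint_lb
  exact ⟨hcontA, fun x hx => ⟨hlower x hx, hupper x hx⟩⟩
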